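/- Let s ∈ ℂ with Re(s) > 1. Then the integral ∫₀¹ (1 − t²)^{−3/2}·(t^{s−1} − 1) dt converges absolutely and equals −√π · Γ(s/2)/Γ((s−1)/2). Equivalently, −π^{−1} ∫₀¹ (1 − t²)^{−3/2}(t^{s−1} − 1) dt = ζ_ℝ(s)/ζ_ℝ(s−1), where ζ_ℝ(s) := π^{−s/2}Γ(s/2). (Proposition 'p:beta_v'(ii),(iv) of the paper at a real place: the Mellin transform of the distribution β_v.) -/

import Mathlib

open MeasureTheory Real Complex

open Set Filter


/-- derivative of `t ↦ (t:ℂ)^(s-1)/(s-1)` is `t^(s-2)` -/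
lemma aux_hasDerivAt_cpow (s : ℂ) (hs : s ≠ 1) {t : ℝ} (ht : t ≠ 0) :
    HasDerivAt (fun y : ℝ => (y : ℂ) ^ (s - 1) / (s - 1)) ((t : ℂ) ^ (s - 2)) t := by
  have h := hasDerivAt_ofReal_cpow_const' ht (r := s - 2) (by
    intro h; apply hs; linear_combination h)
  have : s - 2 + 1 = s - 1 := by ring
  rwa [this] at h

/-- Key bound: `‖t^(s-1) - 1‖ ≤ C (1-t)` on `(0,1)`. -/
lemma aux_bound (s : ℂ) (hs : 1 < s.re) {t : ℝ} (ht : t ∈ Set.Ioo (0:ℝ) 1) :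
    ‖(t : ℂ) ^ (s - 1) - 1‖ ≤ ‖s - 1‖ * max 1 (s.re - 1) / (s.re - 1) * (1 - t) := by
  obtain ⟨ht0, ht1⟩ := ht
  have hs1 : s ≠ 1 := fun h => by simp [h] at hs
  have hσ : 0 < s.re - 1 := by linarith
  have hderiv : ∀ y ∈ Set.uIcc t 1, HasDerivAt (fun y : ℝ => (y : ℂ) ^ (s - 1) / (s - 1))
      ((y : ℂ) ^ (s - 2)) y := by
    intro y hy
    rw [Set.uIcc_of_le ht1.le] at hy
    exact aux_hasDerivAt_cpow s hs1 (by linarith [hy.1] : y ≠ 0)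
  have hcont : ContinuousOn (fun y : ℝ => (y : ℂ) ^ (s - 2)) (Set.uIcc t 1) := by
    intro y hy
    rw [Set.uIcc_of_le ht1.le] at hy
    exact (Complex.continuousAt_ofReal_cpow_const y _ (Or.inr (by linarith [hy.1]))).continuousWithinAt
  have hint : IntervalIntegrable (fun y : ℝ => (y : ℂ) ^ (s - 2)) volume t 1 :=
    hcont.intervalIntegrable
  have hFTC := intervalIntegral.integral_eq_sub_of_hasDerivAt hderiv hint
  rw [Complex.ofReal_one, Complex.one_cpow] at hFTC
  have key : (t : ℂ) ^ (s - 1) - 1 = -((s-1) * ∫ y in t..1, (y : ℂ) ^ (s - 2)) := by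
    rw [hFTC]
    field_simp [sub_ne_zero.mpr hs1]
    ring
  rw [key, norm_neg, norm_mul]
  have hnormint : ‖∫ y in t..1, (y : ℂ) ^ (s - 2)‖ ≤ ∫ y in t..1, y ^ (s.re - 2) := by
    refine le_trans (intervalIntegral.norm_integral_le_integral_norm ht1.le) (le_of_eq ?_)
    refine intervalIntegral.integral_congr fun y hy => ?_
    rw [Set.uIcc_of_le ht1.le] at hy
    rw [Complex.norm_cpow_eq_rpow_re_of_pos (by linarith [hy.1]), Complex.sub_re]
    norm_num
  have hval : ∫ y in t..1, y ^ (s.re - 2) = (1 - t ^ (s.re - 1)) / (s.re - 1) := by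
    rw [integral_rpow (Or.inl (by linarith))]
    rw [Real.one_rpow]
    ring_nf
  have hbern : 1 - t ^ (s.re - 1) ≤ max 1 (s.re - 1) * (1 - t) := by
    rcases le_total (s.re - 1) 1 with h | h
    · have : t ≤ t ^ (s.re - 1) :=
        by simpa using Real.rpow_le_rpow_of_exponent_ge ht0 ht1.le (z := s.re - 1) h
      calc 1 - t ^ (s.re - 1) ≤ 1 - t := by linarith
        _ ≤ max 1 (s.re - 1) * (1 - t) := by nlinarith [le_max_left 1 (s.re - 1)]
    · have hb := one_add_mul_self_le_rpow_one_add (s := t - 1) (by linarith) h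
      have : 1 + (t - 1) = t := by ring
      rw [this] at hb
      calc 1 - t ^ (s.re - 1) ≤ (s.re - 1) * (1 - t) := by nlinarith
        _ ≤ max 1 (s.re - 1) * (1 - t) := by nlinarith [le_max_right 1 (s.re - 1)]
  calc ‖s - 1‖ * ‖∫ y in t..1, (y : ℂ) ^ (s - 2)‖
      ≤ ‖s - 1‖ * ((1 - t ^ (s.re - 1)) / (s.re - 1)) := by
        refine mul_le_mul_of_nonneg_left ?_ (norm_nonneg _)
        rw [← hval]; exact hnormint
    _ ≤ ‖s - 1‖ * max 1 (s.re - 1) / (s.re - 1) * (1 - t) := by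
        rw [div_mul_eq_mul_div, mul_assoc, mul_div_assoc]
        refine mul_le_mul_of_nonneg_left ?_ (norm_nonneg _)
        rw [div_le_div_iff₀ hσ hσ] at *
        nlinarith


/-- integrability of `(1-t)^(-1/2)` type dominating function -/
lemma aux_dom_integrable (C : ℝ) :
    IntegrableOn (fun t : ℝ => C * (1 - t) ^ (-(1:ℝ)/2)) (Set.Ioo (0:ℝ) 1) volume := by
  have h1 : IntervalIntegrable (fun x : ℝ => x ^ (-(1:ℝ)/2)) volume 0 1 :=
    intervalIntegral.intervalIntegrable_rpow' (by norm_num)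
  have h2 := (h1.comp_sub_left 1).symm
  norm_num at h2
  have h3 : IntegrableOn (fun t : ℝ => (1 - t) ^ (-(1:ℝ)/2)) (Set.Ioc (0:ℝ) 1) volume := by
    have h4 := h2.def'
    rw [Set.uIoc_of_le zero_le_one] at h4
    refine h4.congr_fun (fun x hx => by norm_num) measurableSet_Ioc
  exact ((h3.mono_set Set.Ioo_subset_Ioc_self).const_mul C)

lemma aux_f_integrable (s : ℂ) (hs : 1 < s.re) :
    IntegrableOn
      (fun t : ℝ => (((1 - t ^ 2) ^ (-(3 : ℝ) / 2) : ℝ) : ℂ) * ((t : ℂ) ^ (s - 1) - 1))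
      (Set.Ioo (0 : ℝ) 1) volume := by
  set C := ‖s - 1‖ * max 1 (s.re - 1) / (s.re - 1) with hC
  have hmeas : AEStronglyMeasurable
      (fun t : ℝ => (((1 - t ^ 2) ^ (-(3 : ℝ) / 2) : ℝ) : ℂ) * ((t : ℂ) ^ (s - 1) - 1))
      (volume.restrict (Set.Ioo (0:ℝ) 1)) := by
    refine ContinuousOn.aestronglyMeasurable ?_ measurableSet_Ioo
    intro t ht
    refine ContinuousWithinAt.mul ?_ ?_
    · refine Complex.continuous_ofReal.continuousAt.comp_continuousWithinAt ?_
      refine ContinuousWithinAt.rpow_const ?_ ?_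
      · exact (continuous_const.sub (continuous_pow 2)).continuousWithinAt
      · left; nlinarith [ht.1, ht.2]
    · exact ((Complex.continuousAt_ofReal_cpow_const t _ (Or.inr (ne_of_gt ht.1))).sub
        continuousAt_const).continuousWithinAt
  refine Integrable.mono' (aux_dom_integrable C) hmeas ?_
  rw [ae_restrict_iff' measurableSet_Ioo]
  refine Filter.Eventually.of_forall fun t ht => ?_
  obtain ⟨ht0, ht1⟩ := ht
  have h1t2 : (0:ℝ) < 1 - t ^ 2 := by nlinarith
  have h1t : (0:ℝ) < 1 - t := by linarith
  rw [norm_mul, Complex.norm_real, Real.norm_eq_abs,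
    abs_of_pos (Real.rpow_pos_of_pos h1t2 _)]
  have hb := aux_bound s hs ⟨ht0, ht1⟩
  have hmono : (1 - t ^ 2) ^ (-(3:ℝ)/2) ≤ (1 - t) ^ (-(3:ℝ)/2) :=
    Real.rpow_le_rpow_of_nonpos h1t (by nlinarith) (by norm_num)
  have hCnn : 0 ≤ C := by
    apply div_nonneg (mul_nonneg (norm_nonneg _) (le_trans zero_le_one (le_max_left _ _)))
    linarith
  calc (1 - t ^ 2) ^ (-(3:ℝ)/2) * ‖(t : ℂ) ^ (s - 1) - 1‖
      ≤ (1 - t) ^ (-(3:ℝ)/2) * (C * (1 - t)) := by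
        refine mul_le_mul hmono hb (norm_nonneg _) (Real.rpow_nonneg h1t.le _)
    _ = C * ((1 - t) ^ (-(3:ℝ)/2) * (1 - t) ^ (1:ℝ)) := by rw [Real.rpow_one]; ring
    _ = C * (1 - t) ^ (-(1:ℝ)/2) := by
        rw [← Real.rpow_add h1t]; norm_num


lemma aux_sq_image : (fun t : ℝ => t ^ 2) '' Set.Ioo (0:ℝ) 1 = Set.Ioo (0:ℝ) 1 := by
  ext x
  constructor
  · rintro ⟨t, ⟨ht0, ht1⟩, rfl⟩
    refine ⟨by positivity, ?_⟩
    show t ^ 2 < 1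
    nlinarith
  · rintro ⟨hx0, hx1⟩
    exact ⟨Real.sqrt x, ⟨Real.sqrt_pos.mpr hx0,
      by rw [show (1:ℝ) = Real.sqrt 1 by simp]; exact Real.sqrt_lt_sqrt hx0.le hx1⟩,
      Real.sq_sqrt hx0.le⟩

lemma aux_sq_inj : Set.InjOn (fun t : ℝ => t ^ 2) (Set.Ioo (0:ℝ) 1) := by
  intro a ha b hb h
  simp only at h
  nlinarith [ha.1, hb.1]

lemma aux_sq_deriv : ∀ t ∈ Set.Ioo (0:ℝ) 1,
    HasDerivWithinAt (fun t : ℝ => t ^ 2) (2 * t) (Set.Ioo (0:ℝ) 1) t := by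
  intro t _
  simpa using (hasDerivAt_pow 2 t).hasDerivWithinAt

/-- pointwise: `|2t| • g(t²) = 2 * (t^(s-1) * (1-t²)^(-1/2))` -/
lemma aux_subst_pointwise (s : ℂ) {t : ℝ} (ht : t ∈ Set.Ioo (0:ℝ) 1) :
    |2 * t| • (((t ^ 2 : ℝ) : ℂ) ^ (s/2 - 1) * (1 - ((t ^ 2 : ℝ) : ℂ)) ^ ((1:ℂ)/2 - 1)) =
    2 * ((t : ℂ) ^ (s - 1) * (((1 - t ^ 2) ^ (-(1:ℝ)/2) : ℝ) : ℂ)) := by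
  obtain ⟨ht0, ht1⟩ := ht
  have h2t : |2 * t| = 2 * t := abs_of_pos (by linarith)
  have htC : (t : ℂ) ≠ 0 := Complex.ofReal_ne_zero.mpr (ne_of_gt ht0)
  have h1 : ((t ^ 2 : ℝ) : ℂ) ^ (s/2 - 1) = (t : ℂ) ^ (s - 2) := by
    have hcast : ((t ^ 2 : ℝ) : ℂ) = (t : ℂ) ^ (2 : ℂ) := by
      rw [show ((2:ℂ)) = ((2:ℕ):ℂ) by norm_num, Complex.cpow_natCast]
      push_cast; ring
    rw [hcast, ← Complex.cpow_mul]
    · norm_num; ring_nf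
    · rw [show Complex.log (t:ℂ) * 2 = 2 * Complex.log (t:ℂ) by ring]
      simp only [Complex.mul_im, Complex.ofReal_re, Complex.ofReal_im]
      rw [Complex.log_im, Complex.arg_ofReal_of_nonneg ht0.le]
      norm_num [Real.pi_pos]
    · rw [show Complex.log (t:ℂ) * 2 = 2 * Complex.log (t:ℂ) by ring]
      simp only [Complex.mul_im]
      rw [Complex.log_im, Complex.arg_ofReal_of_nonneg ht0.le]
      norm_num [Real.pi_pos.le]
  have h2 : (1 - ((t ^ 2 : ℝ) : ℂ)) ^ ((1:ℂ)/2 - 1) = (((1 - t ^ 2) ^ (-(1:ℝ)/2) : ℝ) : ℂ) := by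
    have hnn : (0:ℝ) ≤ 1 - t ^ 2 := by nlinarith
    rw [show (1 - ((t ^ 2 : ℝ) : ℂ)) = (((1 - t ^ 2 : ℝ)) : ℂ) by push_cast; ring]
    rw [Complex.ofReal_cpow hnn]
    norm_num
  have h3 : (t : ℂ) * (t : ℂ) ^ (s - 2) = (t : ℂ) ^ (s - 1) := by
    rw [show s - 1 = 1 + (s - 2) by ring, Complex.cpow_add _ _ htC, Complex.cpow_one]
  rw [h2t, h1, h2, Complex.real_smul]
  push_cast
  rw [← h3]
  ring

lemma aux_beta_eq (s : ℂ) (hs : 1 < s.re) :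
    Complex.betaIntegral (s/2) (1/2) =
      2 * ∫ t in Set.Ioo (0:ℝ) 1, (t : ℂ) ^ (s - 1) * (((1 - t ^ 2) ^ (-(1:ℝ)/2) : ℝ) : ℂ) := by
  have hsub := integral_image_eq_integral_abs_deriv_smul measurableSet_Ioo aux_sq_deriv aux_sq_inj
    (fun x : ℝ => (x : ℂ) ^ (s/2 - 1) * (1 - (x : ℂ)) ^ ((1:ℂ)/2 - 1))
  rw [aux_sq_image] at hsub
  rw [show Complex.betaIntegral (s/2) (1/2) =
      ∫ x in (0:ℝ)..1, (x : ℂ) ^ (s/2 - 1) * (1 - (x : ℂ)) ^ ((1:ℂ)/2 - 1) from rfl,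
    intervalIntegral.integral_of_le zero_le_one,
    MeasureTheory.integral_Ioc_eq_integral_Ioo]
  rw [hsub, ← MeasureTheory.integral_const_mul]
  refine setIntegral_congr_fun measurableSet_Ioo fun t ht => ?_
  have := aux_subst_pointwise s ht
  push_cast at this ⊢
  rw [this]

lemma aux_I_integrable (s : ℂ) (hs : 1 < s.re) :
    IntegrableOn (fun t : ℝ => (t : ℂ) ^ (s - 1) * (((1 - t ^ 2) ^ (-(1:ℝ)/2) : ℝ) : ℂ))
      (Set.Ioo (0:ℝ) 1) volume := by
  have hbc : IntegrableOn (fun x : ℝ => (x : ℂ) ^ (s/2 - 1) * (1 - (x : ℂ)) ^ ((1:ℂ)/2 - 1))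
      (Set.Ioo (0:ℝ) 1) volume := by
    have hre : 0 < (s/2).re := by
      rw [Complex.div_re]
      norm_num [Complex.normSq_apply]
      linarith
    have hre2 : 0 < ((1:ℂ)/2).re := by norm_num
    have h := (Complex.betaIntegral_convergent hre hre2).def'
    rw [Set.uIoc_of_le zero_le_one] at h
    exact h.mono_set Set.Ioo_subset_Ioc_self
  have hiff := integrableOn_image_iff_integrableOn_abs_deriv_smul measurableSet_Ioo
    aux_sq_deriv aux_sq_inj
    (fun x : ℝ => (x : ℂ) ^ (s/2 - 1) * (1 - (x : ℂ)) ^ ((1:ℂ)/2 - 1))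
  rw [aux_sq_image] at hiff
  have h2 := hiff.mp hbc
  have h3 : IntegrableOn
      (fun t : ℝ => 2 * ((t : ℂ) ^ (s - 1) * (((1 - t ^ 2) ^ (-(1:ℝ)/2) : ℝ) : ℂ)))
      (Set.Ioo (0:ℝ) 1) volume := by
    refine h2.congr_fun (fun t ht => ?_) measurableSet_Ioo
    have := aux_subst_pointwise s ht
    push_cast at this ⊢
    rw [this]
  have h4 : IntegrableOn
      (fun t : ℝ => (2⁻¹ : ℂ) * (2 * ((t : ℂ) ^ (s - 1) * (((1 - t ^ 2) ^ (-(1:ℝ)/2) : ℝ) : ℂ))))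
      (Set.Ioo (0:ℝ) 1) volume := h3.const_mul (2⁻¹ : ℂ)
  refine h4.congr_fun (fun t ht => ?_) measurableSet_Ioo
  ring


noncomputable def auxF (s : ℂ) (t : ℝ) : ℂ :=
  ((t * (1 - t ^ 2) ^ (-(1:ℝ)/2) : ℝ) : ℂ) * ((t : ℂ) ^ (s - 1) - 1)

lemma aux_G_deriv {t : ℝ} (ht : t ∈ Set.Ioo (0:ℝ) 1) :
    HasDerivAt (fun t : ℝ => t * (1 - t ^ 2) ^ (-(1:ℝ)/2)) ((1 - t ^ 2) ^ (-(3:ℝ)/2)) t := by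
  obtain ⟨ht0, ht1⟩ := ht
  have hu : (0:ℝ) < 1 - t ^ 2 := by nlinarith
  have h1 : HasDerivAt (fun t : ℝ => 1 - t ^ 2) (-(2 * t)) t := by
    simpa using ((hasDerivAt_pow 2 t).const_sub 1)
  have h2 : HasDerivAt (fun t : ℝ => (1 - t ^ 2) ^ (-(1:ℝ)/2))
      (-(2 * t) * (-(1:ℝ)/2) * (1 - t ^ 2) ^ (-(1:ℝ)/2 - 1)) t :=
    h1.rpow_const (Or.inl (ne_of_gt hu))
  have h3 := (hasDerivAt_id t).mul h2
  have heq : 1 * (1 - t ^ 2) ^ (-(1:ℝ)/2) + t * (-(2 * t) * (-(1:ℝ)/2) * (1 - t ^ 2) ^ (-(1:ℝ)/2 - 1))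
      = (1 - t ^ 2) ^ (-(3:ℝ)/2) := by
    have e1 : (-(1:ℝ)/2 - 1) = (-(3:ℝ)/2) := by norm_num
    have e2 : (1 - t ^ 2) ^ (-(1:ℝ)/2) = (1 - t ^ 2) ^ (-(3:ℝ)/2) * (1 - t ^ 2) := by
      rw [show (-(1:ℝ)/2) = (-(3:ℝ)/2) + 1 by norm_num, Real.rpow_add hu, Real.rpow_one]
    rw [e1, e2]
    ring
  simp only [id_eq] at h3
  rw [heq] at h3
  exact h3

lemma aux_F_deriv (s : ℂ) (hs : 1 < s.re) {t : ℝ} (ht : t ∈ Set.Ioo (0:ℝ) 1) :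
    HasDerivAt (auxF s)
      ((((1 - t ^ 2) ^ (-(3 : ℝ) / 2) : ℝ) : ℂ) * ((t : ℂ) ^ (s - 1) - 1)
        + (s - 1) * ((t : ℂ) ^ (s - 1) * (((1 - t ^ 2) ^ (-(1:ℝ)/2) : ℝ) : ℂ))) t := by
  obtain ⟨ht0, ht1⟩ := ht
  have hs1 : s ≠ 1 := fun h => by simp [h] at hs
  have htC : (t : ℂ) ≠ 0 := Complex.ofReal_ne_zero.mpr (ne_of_gt ht0)
  have hG : HasDerivAt (fun t : ℝ => ((t * (1 - t ^ 2) ^ (-(1:ℝ)/2) : ℝ) : ℂ))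
      (((1 - t ^ 2) ^ (-(3:ℝ)/2) : ℝ) : ℂ) t := (aux_G_deriv ⟨ht0, ht1⟩).ofReal_comp
  have hg0 := hasDerivAt_ofReal_cpow_const' (ne_of_gt ht0) (r := s - 2)
    (by intro h; apply hs1; linear_combination h)
  rw [show s - 2 + 1 = s - 1 by ring] at hg0
  have hg1 := hg0.const_mul (s - 1)
  have hfun : (fun y : ℝ => (s - 1) * ((y : ℂ) ^ (s - 1) / (s - 1)))
      = fun y : ℝ => (y : ℂ) ^ (s - 1) := by
    funext y
    field_simp [sub_ne_zero.mpr hs1]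
  rw [hfun] at hg1
  have hg : HasDerivAt (fun y : ℝ => (y : ℂ) ^ (s - 1) - 1) ((s - 1) * (t : ℂ) ^ (s - 2)) t :=
    hg1.sub_const 1
  have h := hG.mul hg
  have heq : (((1 - t ^ 2) ^ (-(3:ℝ)/2) : ℝ) : ℂ) * ((t : ℂ) ^ (s - 1) - 1)
      + ((t * (1 - t ^ 2) ^ (-(1:ℝ)/2) : ℝ) : ℂ) * ((s - 1) * (t : ℂ) ^ (s - 2))
      = (((1 - t ^ 2) ^ (-(3 : ℝ) / 2) : ℝ) : ℂ) * ((t : ℂ) ^ (s - 1) - 1)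
        + (s - 1) * ((t : ℂ) ^ (s - 1) * (((1 - t ^ 2) ^ (-(1:ℝ)/2) : ℝ) : ℂ)) := by
    have h3 : (t : ℂ) * (t : ℂ) ^ (s - 2) = (t : ℂ) ^ (s - 1) := by
      rw [show s - 1 = 1 + (s - 2) by ring, Complex.cpow_add _ _ htC, Complex.cpow_one]
    push_cast
    rw [← h3]
    ring
  rw [heq] at h
  exact h

lemma aux_F_norm (s : ℂ) (hs : 1 < s.re) {t : ℝ} (ht : t ∈ Set.Ioo (0:ℝ) 1) :
    ‖auxF s t‖ ≤ ‖s - 1‖ * max 1 (s.re - 1) / (s.re - 1) * (t * (1 - t) ^ ((1:ℝ)/2)) := by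
  obtain ⟨ht0, ht1⟩ := ht
  set C := ‖s - 1‖ * max 1 (s.re - 1) / (s.re - 1) with hC
  have hCnn : 0 ≤ C := by
    apply div_nonneg (mul_nonneg (norm_nonneg _) (le_trans zero_le_one (le_max_left _ _)))
    linarith
  have h1t : (0:ℝ) < 1 - t := by linarith
  have hu : (0:ℝ) < 1 - t ^ 2 := by nlinarith
  rw [auxF, norm_mul, Complex.norm_real, Real.norm_eq_abs,
    abs_of_pos (by positivity : (0:ℝ) < t * (1 - t ^ 2) ^ (-(1:ℝ)/2))]
  have hb := aux_bound s hs ⟨ht0, ht1⟩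
  have hmono : (1 - t ^ 2) ^ (-(1:ℝ)/2) ≤ (1 - t) ^ (-(1:ℝ)/2) :=
    Real.rpow_le_rpow_of_nonpos h1t (by nlinarith) (by norm_num)
  calc t * (1 - t ^ 2) ^ (-(1:ℝ)/2) * ‖(t : ℂ) ^ (s - 1) - 1‖
      ≤ t * (1 - t) ^ (-(1:ℝ)/2) * (C * (1 - t)) := by
        refine mul_le_mul (by nlinarith [Real.rpow_nonneg h1t.le (-(1:ℝ)/2)]) hb (norm_nonneg _) ?_
        positivity
    _ = C * (t * ((1 - t) ^ (-(1:ℝ)/2) * (1 - t) ^ (1:ℝ))) := by rw [Real.rpow_one]; ring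
    _ = C * (t * (1 - t) ^ ((1:ℝ)/2)) := by rw [← Real.rpow_add h1t]; norm_num

lemma aux_FTC (s : ℂ) (hs : 1 < s.re)
    (hf : IntegrableOn
      (fun t : ℝ => (((1 - t ^ 2) ^ (-(3 : ℝ) / 2) : ℝ) : ℂ) * ((t : ℂ) ^ (s - 1) - 1))
      (Set.Ioo (0 : ℝ) 1) volume)
    (hI : IntegrableOn (fun t : ℝ => (t : ℂ) ^ (s - 1) * (((1 - t ^ 2) ^ (-(1:ℝ)/2) : ℝ) : ℂ))
      (Set.Ioo (0:ℝ) 1) volume) :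
    ∫ t in Set.Ioo (0:ℝ) 1,
      ((((1 - t ^ 2) ^ (-(3 : ℝ) / 2) : ℝ) : ℂ) * ((t : ℂ) ^ (s - 1) - 1)
        + (s - 1) * ((t : ℂ) ^ (s - 1) * (((1 - t ^ 2) ^ (-(1:ℝ)/2) : ℝ) : ℂ))) = 0 := by
  set F' : ℝ → ℂ := fun t =>
    (((1 - t ^ 2) ^ (-(3 : ℝ) / 2) : ℝ) : ℂ) * ((t : ℂ) ^ (s - 1) - 1)
      + (s - 1) * ((t : ℂ) ^ (s - 1) * (((1 - t ^ 2) ^ (-(1:ℝ)/2) : ℝ) : ℂ)) with hF'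
  have hFint : IntegrableOn F' (Set.Ioo (0:ℝ) 1) volume := hf.add (hI.const_mul (s - 1))
  set a : ℕ → ℝ := fun n => 1 / (n + 3) with ha
  set b : ℕ → ℝ := fun n => 1 - 1 / (n + 3) with hb
  have hba : ∀ n, b n = 1 - a n := fun n => rfl
  have ha_pos : ∀ n, 0 < a n := fun n => by positivity
  have ha_lt : ∀ n, a n < 1/2 := fun n => by
    rw [ha]
    rw [div_lt_div_iff₀ (by positivity) (by norm_num)]
    push_cast; linarith [Nat.cast_nonneg (α := ℝ) n]
  have hab : ∀ n, a n < b n := fun n => by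
    have := ha_lt n; rw [hba]; linarith
  have hb_lt : ∀ n, b n < 1 := fun n => by
    have := ha_pos n; rw [hba]; linarith
  have hsub : ∀ n, Set.Ioo (a n) (b n) ⊆ Set.Ioo (0:ℝ) 1 := fun n x hx =>
    ⟨lt_trans (ha_pos n) hx.1, lt_trans hx.2 (hb_lt n)⟩
  have ha_anti : ∀ n m, n ≤ m → a m ≤ a n := fun n m h => by
    rw [ha]
    apply one_div_le_one_div_of_le (by positivity)
    push_cast
    exact add_le_add_left (Nat.cast_le.mpr h) 3
  have hmono : Monotone fun n => Set.Ioo (a n) (b n) := by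
    intro n m h x hx
    have h2 := ha_anti n m h
    constructor
    · exact lt_of_le_of_lt h2 hx.1
    · refine lt_of_lt_of_le hx.2 ?_
      show b n ≤ b m
      rw [hba n, hba m]; linarith
  have hunion : (⋃ n, Set.Ioo (a n) (b n)) = Set.Ioo (0:ℝ) 1 := by
    ext x
    simp only [Set.mem_iUnion]
    constructor
    · rintro ⟨n, hx⟩; exact hsub n hx
    · rintro ⟨hx0, hx1⟩
      obtain ⟨n, hn⟩ := exists_nat_one_div_lt (show (0:ℝ) < min x (1 - x) by
        apply lt_min hx0; linarith)
      refine ⟨n, ?_, ?_⟩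
      · have h1 : a n ≤ 1 / (n + 1) := by
          rw [ha]
          apply one_div_le_one_div_of_le (by positivity)
          push_cast; linarith
        calc a n ≤ 1 / (n + 1) := h1
          _ < min x (1 - x) := hn
          _ ≤ x := min_le_left _ _
      · have h1 : a n ≤ 1 / (n + 1) := by
          rw [ha]
          apply one_div_le_one_div_of_le (by positivity)
          push_cast; linarith
        have h2 : a n < 1 - x := lt_of_le_of_lt h1 (lt_of_lt_of_le hn (min_le_right _ _))
        rw [hba]; linarith
  have htend := tendsto_setIntegral_of_monotone (fun n => measurableSet_Ioo) hmono
    (by rw [hunion]; exact hFint) (f := F') (μ := volume)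
  rw [hunion] at htend
  have heval : ∀ n, (∫ x in Set.Ioo (a n) (b n), F' x) = auxF s (b n) - auxF s (a n) := by
    intro n
    have hderiv : ∀ x ∈ Set.uIcc (a n) (b n), HasDerivAt (auxF s) (F' x) x := by
      intro x hx
      rw [Set.uIcc_of_le (hab n).le] at hx
      exact aux_F_deriv s hs ⟨lt_of_lt_of_le (ha_pos n) hx.1, lt_of_le_of_lt hx.2 (hb_lt n)⟩
    have hii : IntervalIntegrable F' volume (a n) (b n) := by
      rw [intervalIntegrable_iff_integrableOn_Ioo_of_le (hab n).le]
      exact hFint.mono_set (hsub n)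
    have := intervalIntegral.integral_eq_sub_of_hasDerivAt hderiv hii
    rw [intervalIntegral.integral_of_le (hab n).le, MeasureTheory.integral_Ioc_eq_integral_Ioo] at this
    exact this
  set C := ‖s - 1‖ * max 1 (s.re - 1) / (s.re - 1) with hC
  have hCnn : 0 ≤ C := by
    apply div_nonneg (mul_nonneg (norm_nonneg _) (le_trans zero_le_one (le_max_left _ _)))
    linarith
  have hta : Tendsto a atTop (nhds 0) := by
    have h1 : Tendsto (fun n : ℕ => (n:ℝ) + 3) atTop atTop :=
      tendsto_atTop_add_const_right atTop 3 tendsto_natCast_atTop_atTop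
    have h2 := h1.inv_tendsto_atTop
    have h3 : Tendsto (fun n : ℕ => 1 / ((n:ℝ) + 3)) atTop (nhds 0) :=
      h2.congr fun n => (one_div _).symm
    exact ha ▸ h3
  have hFa : Tendsto (fun n => auxF s (a n)) atTop (nhds 0) := by
    apply squeeze_zero_norm (a := fun n => C * a n)
    · intro n
      have h := aux_F_norm s hs ⟨ha_pos n, by linarith [ha_lt n]⟩
      rw [← hC] at h
      refine le_trans h ?_
      have h1 : (1 - a n) ^ ((1:ℝ)/2) ≤ 1 :=
        Real.rpow_le_one (by linarith [ha_lt n]) (by linarith [ha_pos n]) (by norm_num)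
      have h2 : a n * (1 - a n) ^ ((1:ℝ)/2) ≤ a n :=
        mul_le_of_le_one_right (ha_pos n).le h1
      exact mul_le_mul_of_nonneg_left h2 hCnn
    · have h4 := hta.const_mul C
      rwa [mul_zero] at h4
  have hFb : Tendsto (fun n => auxF s (b n)) atTop (nhds 0) := by
    apply squeeze_zero_norm (a := fun n => C * (a n) ^ ((1:ℝ)/2))
    · intro n
      have hbn : b n ∈ Set.Ioo (0:ℝ) 1 := ⟨by have := ha_lt n; rw [hb]; linarith, hb_lt n⟩
      have h := aux_F_norm s hs hbn
      rw [← hC] at h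
      have h2 : 1 - b n = a n := by rw [hba]; ring
      rw [h2] at h
      refine le_trans h ?_
      have h3 : b n * (a n) ^ ((1:ℝ)/2) ≤ (a n) ^ ((1:ℝ)/2) :=
        mul_le_of_le_one_left (Real.rpow_nonneg (ha_pos n).le _) (hb_lt n).le
      exact mul_le_mul_of_nonneg_left h3 hCnn
    · have : Tendsto (fun n => (a n) ^ ((1:ℝ)/2)) atTop (nhds 0) := by
        have h0 : ((0:ℝ)) ^ ((1:ℝ)/2) = 0 := by
          rw [Real.zero_rpow]; norm_num
        rw [← h0]
        exact (Real.continuousAt_rpow_const 0 ((1:ℝ)/2) (Or.inr (by norm_num))).tendsto.comp hta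
      simpa using this.const_mul C
  have hlim : Tendsto (fun n => (∫ x in Set.Ioo (a n) (b n), F' x)) atTop (nhds 0) := by
    have := hFb.sub hFa
    rw [sub_zero] at this
    exact this.congr fun n => (heval n).symm
  exact tendsto_nhds_unique htend hlim


theorem stmt_11 (s : ℂ) (hs : 1 < s.re) :
    IntegrableOn
      (fun t : ℝ =>
        (((1 - t ^ 2) ^ (-(3 : ℝ) / 2) : ℝ) : ℂ) * ((t : ℂ) ^ (s - 1) - 1))
      (Set.Ioo (0 : ℝ) 1) volume ∧
    ∫ t in Set.Ioo (0 : ℝ) 1,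
        (((1 - t ^ 2) ^ (-(3 : ℝ) / 2) : ℝ) : ℂ) * ((t : ℂ) ^ (s - 1) - 1)
      = -(Real.sqrt π : ℂ) * Complex.Gamma (s / 2) / Complex.Gamma ((s - 1) / 2) ∧
    -(π : ℂ)⁻¹ * ∫ t in Set.Ioo (0 : ℝ) 1,
        (((1 - t ^ 2) ^ (-(3 : ℝ) / 2) : ℝ) : ℂ) * ((t : ℂ) ^ (s - 1) - 1)
      = ((π : ℂ) ^ (-s / 2) * Complex.Gamma (s / 2)) /
          ((π : ℂ) ^ (-(s - 1) / 2) * Complex.Gamma ((s - 1) / 2)) := by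
  have hf := aux_f_integrable s hs
  have hI := aux_I_integrable s hs
  have hs1 : s - 1 ≠ 0 := fun h => by
    have : s = 1 := by linear_combination h
    simp [this] at hs
  -- value of the integral of h
  set I : ℂ := ∫ t in Set.Ioo (0:ℝ) 1, (t : ℂ) ^ (s - 1) * (((1 - t ^ 2) ^ (-(1:ℝ)/2) : ℝ) : ℂ)
    with hIdef
  have hsplit := MeasureTheory.integral_add hf (hI.const_mul (s - 1))
  rw [aux_FTC s hs hf hI] at hsplit
  have hmul : (∫ t in Set.Ioo (0:ℝ) 1,
      (s - 1) * ((t : ℂ) ^ (s - 1) * (((1 - t ^ 2) ^ (-(1:ℝ)/2) : ℝ) : ℂ))) = (s - 1) * I := by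
    rw [hIdef, ← MeasureTheory.integral_const_mul]
  have hint : (∫ t in Set.Ioo (0:ℝ) 1,
      (((1 - t ^ 2) ^ (-(3 : ℝ) / 2) : ℝ) : ℂ) * ((t : ℂ) ^ (s - 1) - 1)) = -((s - 1) * I) := by
    rw [← hmul]
    linear_combination -hsplit
  -- Gamma facts
  have hre : 0 < (s/2).re := by
    rw [Complex.div_re]; norm_num [Complex.normSq_apply]; linarith
  have hre2 : 0 < ((1:ℂ)/2).re := by norm_num
  have hre3 : 0 < ((s-1)/2).re := by
    rw [Complex.div_re]
    norm_num [Complex.normSq_apply, Complex.sub_re]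
    linarith
  have hΓb : Complex.Gamma ((s-1)/2) ≠ 0 := Complex.Gamma_ne_zero_of_re_pos hre3
  have hbeta := Complex.Gamma_mul_Gamma_eq_betaIntegral hre hre2
  rw [aux_beta_eq s hs, ← hIdef] at hbeta
  have hG1 : Complex.Gamma (s/2 + 1/2) = ((s-1)/2) * Complex.Gamma ((s-1)/2) := by
    rw [show s/2 + 1/2 = (s-1)/2 + 1 by ring, Complex.Gamma_add_one _ (fun h => by
      rw [h] at hre3; simp at hre3)]
  rw [hG1] at hbeta
  have hsqrt : ((Real.sqrt π : ℝ) : ℂ) = (π : ℂ) ^ ((1:ℂ)/2) := by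
    rw [Real.sqrt_eq_rpow, Complex.ofReal_cpow Real.pi_pos.le]
    norm_num
  have hΓhalf : Complex.Gamma ((1:ℂ)/2) = ((Real.sqrt π : ℝ) : ℂ) := by
    rw [hsqrt]
    exact Complex.Gamma_one_half_eq
  rw [hΓhalf] at hbeta
  -- part (ii)
  have hii : (∫ t in Set.Ioo (0:ℝ) 1,
      (((1 - t ^ 2) ^ (-(3 : ℝ) / 2) : ℝ) : ℂ) * ((t : ℂ) ^ (s - 1) - 1))
      = -(Real.sqrt π : ℂ) * Complex.Gamma (s / 2) / Complex.Gamma ((s - 1) / 2) := by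
    rw [hint, eq_div_iff hΓb]
    linear_combination hbeta
  refine ⟨hf, hii, ?_⟩
  -- part (iv)
  rw [hii]
  have hpi : (π : ℂ) ≠ 0 := Complex.ofReal_ne_zero.mpr Real.pi_ne_zero
  have hcne : (π : ℂ) ^ (-(s-1)/2) ≠ 0 := by
    rw [Ne, Complex.cpow_eq_zero_iff]
    tauto
  have hsplit2 : (π : ℂ) ^ (-s/2) = (π : ℂ) ^ (-(s-1)/2) * (π : ℂ) ^ (-(1:ℂ)/2) := by
    rw [← Complex.cpow_add _ _ hpi]
    ring_nf
  have hhalf : (π : ℂ)⁻¹ * (π : ℂ) ^ ((1:ℂ)/2) = (π : ℂ) ^ (-(1:ℂ)/2) := by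
    rw [show (-(1:ℂ)/2) = (1:ℂ)/2 + (-1) by ring, Complex.cpow_add _ _ hpi,
      Complex.cpow_neg_one]
    ring
  have key : ((π : ℂ) ^ (-s/2) * Complex.Gamma (s/2)) /
      ((π : ℂ) ^ (-(s-1)/2) * Complex.Gamma ((s-1)/2))
      = ((π : ℂ) ^ (-(1:ℂ)/2) * Complex.Gamma (s/2)) / Complex.Gamma ((s-1)/2) := by
    rw [hsplit2]
    rw [show (π : ℂ) ^ (-(s-1)/2) * (π : ℂ) ^ (-(1:ℂ)/2) * Complex.Gamma (s/2)
        = (π : ℂ) ^ (-(s-1)/2) * ((π : ℂ) ^ (-(1:ℂ)/2) * Complex.Gamma (s/2)) from by ring,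
      mul_div_mul_left _ _ hcne]
  rw [key, hsqrt, ← hhalf]
  ring
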